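/- arXiv:1203.3831 — 2 statements merged into one kernel-verified Lean document; each statement's English description precedes it below -/
import Mathlib

section
/- Let Ã be a real symmetric positive definite d×d matrix with eigenvalues α₁↑ ≤ α₂↑ ≤ … in increasing order. Then for any two orthonormal vectors v₁, v₂ in ℝ^d, ⟨v₁, Ã v₁⟩ · ⟨v₂, Ã v₂⟩ ≥ α₁↑ α₂↑. -/
open Matrix
open scoped ComplexOrder

open Classical in
/-- The eigenvalues of a matrix in increasing order (junk value `0` if not Hermitian). -/
noncomputable def eigUp {d : ℕ} (M : Matrix (Fin d) (Fin d) ℝ) : Fin d → ℝ :=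
  if h : M.IsHermitian then h.eigenvalues ∘ Tuple.sort h.eigenvalues else 0

/-- The eigenvalues of a matrix in decreasing order. -/
noncomputable def eigDown {d : ℕ} (M : Matrix (Fin d) (Fin d) ℝ) (j : Fin d) : ℝ :=
  eigUp M j.rev

/-- The standard symplectic form on `2n` canonical variables: block diagonal with
blocks `[[0,1],[-1,0]]`. -/
def Omega (n : ℕ) : Matrix (Fin (2*n)) (Fin (2*n)) ℝ :=
  Matrix.of fun i j =>
    if (i : ℕ) + 1 = (j : ℕ) ∧ (i : ℕ) % 2 = 0 then 1
    else if (j : ℕ) + 1 = (i : ℕ) ∧ (j : ℕ) % 2 = 0 then -1 else 0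

/-- Partial transposition matrix `T = 𝟙₂^{⊕ l} ⊕ σz^{⊕ (n-l)}` for the bipartition of the
first `l` versus the last `n - l` modes. -/
def Tmat (n l : ℕ) : Matrix (Fin (2*n)) (Fin (2*n)) ℝ :=
  Matrix.diagonal fun i => if (i : ℕ) / 2 < l ∨ (i : ℕ) % 2 = 0 then 1 else -1

/-- The partially transposed symplectic form `Ω̃ = T Ω T`. -/
def OmegaPT (n l : ℕ) : Matrix (Fin (2*n)) (Fin (2*n)) ℝ :=
  Tmat n l * Omega n * Tmat n l

open Classical in
/-- The positive square root of a positive semidefinite matrix (junk value `0` otherwise). -/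
noncomputable def msqrt {d : ℕ} (M : Matrix (Fin d) (Fin d) ℝ) : Matrix (Fin d) (Fin d) ℝ :=
  if h : M.PosSemidef then
    h.1.eigenvectorUnitary.1 * diagonal (Real.sqrt ∘ h.1.eigenvalues) *
      (star h.1.eigenvectorUnitary : Matrix (Fin d) (Fin d) ℝ) else 0

/-- `σ + iΩ ≥ 0`: the Robertson–Schrödinger condition for a real symmetric matrix `σ`
to be a bona fide covariance matrix. -/
def IsCM (n : ℕ) (σ : Matrix (Fin (2*n)) (Fin (2*n)) ℝ) : Prop :=
  σ.IsSymm ∧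
    (σ.map (Complex.ofReal ·) + Complex.I • (Omega n).map (Complex.ofReal ·)).PosSemidef

/-- `ν̃₋²`, the square of the smallest partially transposed symplectic eigenvalue of `σ`, for
the bipartition of the first `l` versus the remaining modes: the smallest eigenvalue of
`σ^{1/2} Ω̃ᵀ σ Ω̃ σ^{1/2}`. -/
noncomputable def nuSq (n l : ℕ) (σ : Matrix (Fin (2*n)) (Fin (2*n)) ℝ) : ℝ :=
  sInf (spectrum ℝ (msqrt σ * (OmegaPT n l)ᵀ * σ * OmegaPT n l * msqrt σ))

/-- `ν̃₋`, the smallest partially transposed symplectic eigenvalue of `σ`. -/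
noncomputable def nuMin (n l : ℕ) (σ : Matrix (Fin (2*n)) (Fin (2*n)) ℝ) : ℝ :=
  Real.sqrt (nuSq n l σ)

/-- The logarithmic negativity `E_N(σ) = max (0, −log₂ ν̃₋)`. -/
noncomputable def logNeg (n l : ℕ) (σ : Matrix (Fin (2*n)) (Fin (2*n)) ℝ) : ℝ :=
  max 0 (-(Real.logb 2 (nuMin n l σ)))


section RayleighAux
open Finset

lemma my_bessel_two {d : ℕ} (w₁ w₂ : Fin d → ℝ) (h1 : w₁ ⬝ᵥ w₁ = 1) (h2 : w₂ ⬝ᵥ w₂ = 1)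
    (h12 : w₁ ⬝ᵥ w₂ = 0) (i : Fin d) : w₁ i ^ 2 + w₂ i ^ 2 ≤ 1 := by
  classical
  set a := w₁ i
  set b := w₂ i
  have h0 : (0:ℝ) ≤ ∑ j, ((if j = i then (1:ℝ) else 0) - a * w₁ j - b * w₂ j)^2 :=
    Finset.sum_nonneg fun j _ => sq_nonneg _
  have expand : ∀ j : Fin d,
      ((if j = i then (1:ℝ) else 0) - a * w₁ j - b * w₂ j)^2 =
      (if j = i then (1:ℝ) else 0)*(if j = i then (1:ℝ) else 0)
        - 2*a*((if j = i then (1:ℝ) else 0) * w₁ j)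
        - 2*b*((if j = i then (1:ℝ) else 0) * w₂ j)
        + a^2*(w₁ j * w₁ j) + 2*(a*b)*(w₁ j * w₂ j) + b^2*(w₂ j * w₂ j) := by
    intro j; ring
  rw [Finset.sum_congr rfl fun j _ => expand j] at h0
  simp only [Finset.sum_add_distrib, Finset.sum_sub_distrib, ← Finset.mul_sum] at h0
  have e1 : ∑ j, (if j = i then (1:ℝ) else 0)*(if j = i then (1:ℝ) else 0) = 1 := by
    simp
  have e2 : ∑ j, (if j = i then (1:ℝ) else 0) * w₁ j = a := by simp; rfl
  have e3 : ∑ j, (if j = i then (1:ℝ) else 0) * w₂ j = b := by simp; rfl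
  have e4 : ∑ j, w₁ j * w₁ j = 1 := h1
  have e5 : ∑ j, w₁ j * w₂ j = 0 := h12
  have e6 : ∑ j, w₂ j * w₂ j = 1 := h2
  rw [e1, e2, e3, e4, e5, e6] at h0
  nlinarith [h0]

lemma my_sum_mu_bound {d : ℕ} (μ w : Fin d → ℝ) (i0 : Fin d) (a b : ℝ)
    (ha : a ≤ μ i0) (hb : ∀ i, i ≠ i0 → b ≤ μ i) (hw : ∑ i, w i ^ 2 = 1) :
    a * w i0 ^ 2 + b * (1 - w i0 ^ 2) ≤ ∑ i, μ i * w i ^ 2 := by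
  classical
  have hsplit : ∑ i, μ i * w i ^ 2
      = μ i0 * w i0 ^ 2 + ∑ i ∈ univ.erase i0, μ i * w i ^ 2 :=
    (Finset.add_sum_erase _ _ (mem_univ _)).symm
  have hsplit2 : (1:ℝ) = w i0 ^ 2 + ∑ i ∈ univ.erase i0, w i ^ 2 := by
    rw [← hw]; exact (Finset.add_sum_erase _ _ (mem_univ _)).symm
  have h4 : ∑ i ∈ univ.erase i0, b * w i ^ 2 ≤ ∑ i ∈ univ.erase i0, μ i * w i ^ 2 :=
    Finset.sum_le_sum fun i hi =>
      mul_le_mul_of_nonneg_right (hb i (Finset.ne_of_mem_erase hi)) (sq_nonneg _)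
  have h5 : a * w i0 ^ 2 ≤ μ i0 * w i0 ^ 2 :=
    mul_le_mul_of_nonneg_right ha (sq_nonneg _)
  have h6 : b * (1 - w i0 ^ 2) = ∑ i ∈ univ.erase i0, b * w i ^ 2 := by
    rw [← Finset.mul_sum]; congr 1; linarith
  linarith

lemma my_isometry {d : ℕ} {U : Matrix (Fin d) (Fin d) ℝ} (hU : U * Uᵀ = 1)
    (x y : Fin d → ℝ) : (Uᵀ *ᵥ x) ⬝ᵥ (Uᵀ *ᵥ y) = x ⬝ᵥ y := by
  rw [mulVec_transpose U x, ← dotProduct_mulVec, mulVec_mulVec, hU, one_mulVec]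

lemma my_quad_form {d : ℕ} {A : Matrix (Fin d) (Fin d) ℝ} (hA : A.IsHermitian)
    (v : Fin d → ℝ) :
    v ⬝ᵥ A *ᵥ v = ∑ i, hA.eigenvalues i *
      (((hA.eigenvectorUnitary : Matrix (Fin d) (Fin d) ℝ))ᵀ *ᵥ v) i ^ 2 := by
  set U : Matrix (Fin d) (Fin d) ℝ := (hA.eigenvectorUnitary : Matrix (Fin d) (Fin d) ℝ)
  have hstar : star U = Uᵀ := by
    rw [Matrix.star_eq_conjTranspose, Matrix.conjTranspose_eq_transpose_of_trivial]
  have hspec : A = U * Matrix.diagonal hA.eigenvalues * Uᵀ := by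
    have := hA.spectral_theorem
    rw [← hstar]
    simpa [Function.comp] using this
  conv_lhs => rw [hspec]
  rw [← Matrix.mulVec_mulVec, ← Matrix.mulVec_mulVec, Matrix.dotProduct_mulVec v U,
    ← Matrix.mulVec_transpose]
  simp only [dotProduct, Matrix.mulVec_diagonal]
  exact Finset.sum_congr rfl fun i _ => by ring

end RayleighAux

/-- For a real symmetric positive definite matrix `Ã` and orthonormal vectors `v₁, v₂`,
the product of Rayleigh quotients `⟨v₁, Ãv₁⟩⟨v₂, Ãv₂⟩` is at least the product of the
two smallest eigenvalues `α₁↑ α₂↑` of `Ã`. -/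
theorem rayleigh_product_lower_bound (d : ℕ) (hd : 2 ≤ d)
    (Atil : Matrix (Fin d) (Fin d) ℝ) (hA : Atil.PosDef)
    (v₁ v₂ : Fin d → ℝ) (h1 : v₁ ⬝ᵥ v₁ = 1) (h2 : v₂ ⬝ᵥ v₂ = 1) (h12 : v₁ ⬝ᵥ v₂ = 0) :
    eigUp Atil ⟨0, by omega⟩ * eigUp Atil ⟨1, by omega⟩ ≤
      (v₁ ⬝ᵥ Atil *ᵥ v₁) * (v₂ ⬝ᵥ Atil *ᵥ v₂) := by
  classical
  have h : Atil.IsHermitian := hA.isHermitian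
  set μ := h.eigenvalues with hμ
  set es := Tuple.sort μ with hes
  have heig : eigUp Atil = μ ∘ es := by
    simp only [eigUp, dif_pos h]
    rfl
  have mono := Tuple.monotone_sort μ
  set i0 := es ⟨0, by omega⟩ with hi0
  set a := μ (es ⟨0, by omega⟩) with ha_def
  set b := μ (es ⟨1, by omega⟩) with hb_def
  have hab : a ≤ b := mono (by simp [Fin.le_def])
  have ha_pos : 0 < a := hA.eigenvalues_pos _
  have hb_i : ∀ i, i ≠ i0 → b ≤ μ i := by
    intro i hi
    have hie : i = es (es.symm i) := (es.apply_symm_apply i).symm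
    rw [hie]
    apply mono
    have hne : (es.symm i).val ≠ 0 := by
      intro hv
      exact hi (by rw [hie]; congr 1; exact Fin.ext hv)
    rw [Fin.le_def]
    simpa using Nat.one_le_iff_ne_zero.mpr hne
  set U : Matrix (Fin d) (Fin d) ℝ := (h.eigenvectorUnitary : Matrix (Fin d) (Fin d) ℝ) with hUdef
  have hstar : star U = Uᵀ := by
    rw [Matrix.star_eq_conjTranspose, Matrix.conjTranspose_eq_transpose_of_trivial]
  have hU : U * Uᵀ = 1 := by
    have := (Matrix.mem_unitaryGroup_iff).mp h.eigenvectorUnitary.2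
    rwa [hstar] at this
  set w₁ := Uᵀ *ᵥ v₁ with hw1def
  set w₂ := Uᵀ *ᵥ v₂ with hw2def
  have hww1 : w₁ ⬝ᵥ w₁ = 1 := by rw [hw1def, my_isometry hU, h1]
  have hww2 : w₂ ⬝ᵥ w₂ = 1 := by rw [hw2def, my_isometry hU, h2]
  have hww12 : w₁ ⬝ᵥ w₂ = 0 := by rw [hw1def, hw2def, my_isometry hU, h12]
  have hs1 : ∑ i, w₁ i ^ 2 = 1 := by
    rw [← hww1]; exact Finset.sum_congr rfl fun i _ => sq (w₁ i)
  have hs2 : ∑ i, w₂ i ^ 2 = 1 := by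
    rw [← hww2]; exact Finset.sum_congr rfl fun i _ => sq (w₂ i)
  have hbes := my_bessel_two w₁ w₂ hww1 hww2 hww12 i0
  set p := w₁ i0 ^ 2 with hp_def
  set q := w₂ i0 ^ 2 with hq_def
  have hp0 : 0 ≤ p := sq_nonneg _
  have hq0 : 0 ≤ q := sq_nonneg _
  have hR1 : a * p + b * (1 - p) ≤ v₁ ⬝ᵥ Atil *ᵥ v₁ := by
    rw [my_quad_form h v₁]
    exact my_sum_mu_bound μ w₁ i0 a b (le_of_eq ha_def) hb_i hs1
  have hR2 : a * q + b * (1 - q) ≤ v₂ ⬝ᵥ Atil *ᵥ v₂ := by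
    rw [my_quad_form h v₂]
    exact my_sum_mu_bound μ w₂ i0 a b (le_of_eq ha_def) hb_i hs2
  have hL1 : a ≤ a * p + b * (1 - p) := by nlinarith
  have hL2 : a ≤ a * q + b * (1 - q) := by nlinarith
  have hprod : (a * p + b * (1 - p)) * (a * q + b * (1 - q)) ≤
      (v₁ ⬝ᵥ Atil *ᵥ v₁) * (v₂ ⬝ᵥ Atil *ᵥ v₂) :=
    mul_le_mul hR1 hR2 (by linarith) (by linarith)
  have hkey : a * b ≤ (a * p + b * (1 - p)) * (a * q + b * (1 - q)) := by
    have hid : (a * p + b * (1 - p)) * (a * q + b * (1 - q)) - a * b =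
        (1 - p - q) * ((b - a) * b) + (p * q) * (b - a) ^ 2 := by ring
    nlinarith [mul_nonneg hp0 hq0, sq_nonneg (b - a),
      mul_nonneg (mul_nonneg hp0 hq0) (sq_nonneg (b - a)),
      mul_nonneg (sub_nonneg.mpr hbes) (mul_nonneg (sub_nonneg.mpr hab) (le_of_lt (lt_of_lt_of_le ha_pos hab)))]
  have hfin : eigUp Atil ⟨0, by omega⟩ = a := by rw [heig]; rfl
  have hfin2 : eigUp Atil ⟨1, by omega⟩ = b := by rw [heig]; rfl
  rw [hfin, hfin2]
  linarith
end

section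
/- (Parametric system, maximal entanglement.) Fix N ≥ 0 and 0 ≤ χ < 1/2, and set M = [[0, σz],[σz, 0]] (4×4, with σz = diag(1,−1)), A = −(1/2)𝟙₄ + χM, and D = (1+2N)𝟙₄. Then Ã := −(A + Aᵀ) = 𝟙₄ − 2χM is positive definite, its two smallest eigenvalues both equal 1−2χ, and every real symmetric 4×4 matrix σ satisfying σ + iΩ ≥ 0 and Aσ + σAᵀ + D ≥ 0 has, for the 1 vs 1 bipartition, smallest partially transposed symplectic eigenvalue ν̃₋ ≥ (1−2χ)/(1+2N); equivalently its logarithmic negativity satisfies E_N(σ) ≤ log₂(1+2N) − log₂(1−2χ). -/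
open Matrix
open scoped ComplexOrder

section AuxLemmas

open Matrix

lemma aux_sum_eig_trace {n : Type*} [Fintype n] [DecidableEq n] {A : Matrix n n ℝ}
    (hA : A.IsHermitian) : ∑ i, hA.eigenvalues i = A.trace := by
  conv_rhs => rw [hA.spectral_theorem]
  rw [Unitary.conjStarAlgAut_apply, Matrix.trace_mul_cycle, Unitary.coe_star_mul_self, one_mul, Matrix.trace_diagonal]
  simp

lemma aux_dp_pos {n : Type*} [Fintype n] {v : n → ℝ} (hv : v ≠ 0) : 0 < v ⬝ᵥ v := by
  obtain ⟨i, hi⟩ := Function.ne_iff.mp hv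
  exact Finset.sum_pos' (fun j _ => mul_self_nonneg _)
    ⟨i, Finset.mem_univ i, mul_self_pos.mpr hi⟩

lemma aux_move {n : Type*} [Fintype n] {Mx : Matrix n n ℝ} (h : Mxᵀ = Mx) (x y : n → ℝ) :
    x ⬝ᵥ Mx *ᵥ y = (Mx *ᵥ x) ⬝ᵥ y := by
  rw [Matrix.dotProduct_mulVec, ← Matrix.mulVec_transpose, h]

lemma aux_swap {n : Type*} [Fintype n] {Mx : Matrix n n ℝ} (h : Mxᵀ = Mx) (x y : n → ℝ) :
    x ⬝ᵥ Mx *ᵥ y = y ⬝ᵥ Mx *ᵥ x := by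
  rw [aux_move h, dotProduct_comm]

lemma aux_dpA {n : Type*} [Fintype n] (A : Matrix n n ℝ) (x : n → ℝ) :
    (A *ᵥ x) ⬝ᵥ (A *ᵥ x) = x ⬝ᵥ (Aᵀ * A) *ᵥ x := by
  conv_rhs => rw [← Matrix.mulVec_mulVec]
  rw [Matrix.dotProduct_mulVec x Aᵀ, Matrix.vecMul_transpose]

lemma aux_transpose_of_herm {n : Type*} [Fintype n] {A : Matrix n n ℝ}
    (h : A.IsHermitian) : Aᵀ = A := by
  rw [← Matrix.conjTranspose_eq_transpose_of_trivial]; exact h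

lemma aux_cs {n : Type*} [Fintype n] {σ : Matrix n n ℝ} (hσ : σ.PosSemidef) (x y : n → ℝ) :
    (x ⬝ᵥ σ *ᵥ y)^2 ≤ (x ⬝ᵥ σ *ᵥ x) * (y ⬝ᵥ σ *ᵥ y) := by
  have hsym : σᵀ = σ := aux_transpose_of_herm hσ.1
  have key : ∀ s : ℝ, 0 ≤ (y ⬝ᵥ σ *ᵥ y) * (s*s) + (2*(x ⬝ᵥ σ *ᵥ y)) * s + x ⬝ᵥ σ *ᵥ x := by
    intro s
    have h := hσ.dotProduct_mulVec_nonneg (x + s • y)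
    rw [star_trivial] at h
    have expand : (x + s • y) ⬝ᵥ σ *ᵥ (x + s • y)
        = (y ⬝ᵥ σ *ᵥ y) * (s*s) + (2*(x ⬝ᵥ σ *ᵥ y)) * s + x ⬝ᵥ σ *ᵥ x := by
      rw [Matrix.mulVec_add, Matrix.mulVec_smul, dotProduct_add, add_dotProduct,
        add_dotProduct, dotProduct_smul, smul_dotProduct,
        smul_dotProduct, dotProduct_smul, aux_swap hsym y x]
      simp only [smul_eq_mul]
      ring
    rw [expand] at h
    exact h
  have hd := discrim_le_zero key
  rw [discrim] at hd
  nlinarith [hd]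

lemma aux_psd_smul {n : Type*} [Fintype n] {X : Matrix n n ℝ} (hX : X.PosSemidef) {c : ℝ}
    (hc : 0 ≤ c) : (c • X).PosSemidef := by
  refine Matrix.PosSemidef.of_dotProduct_mulVec_nonneg ?_ ?_
  · unfold Matrix.IsHermitian
    rw [Matrix.conjTranspose_smul, star_trivial, hX.1]
  · intro x
    rw [star_trivial, Matrix.smul_mulVec, dotProduct_smul, smul_eq_mul]
    exact mul_nonneg hc (by simpa using hX.dotProduct_mulVec_nonneg x)

lemma aux_spec_lb {n : Type*} [Fintype n] [DecidableEq n] [Nonempty n]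
    {B : Matrix n n ℝ} (hB : B.IsHermitian) {c : ℝ}
    (hpsd : (B - c • 1).PosSemidef) : c ≤ sInf (spectrum ℝ B) := by
  apply le_csInf ⟨hB.eigenvalues (Classical.arbitrary n), hB.eigenvalues_mem_spectrum_real _⟩
  intro μ hμ
  rw [spectrum.mem_iff, Matrix.isUnit_iff_isUnit_det, isUnit_iff_ne_zero, not_not] at hμ
  obtain ⟨v, hv0, hv⟩ := Matrix.exists_mulVec_eq_zero_iff.mpr hμ
  rw [Algebra.algebraMap_eq_smul_one, Matrix.sub_mulVec, Matrix.smul_mulVec,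
    Matrix.one_mulVec, sub_eq_zero] at hv
  have h1 := hpsd.dotProduct_mulVec_nonneg v
  rw [star_trivial, Matrix.sub_mulVec, Matrix.smul_mulVec, Matrix.one_mulVec,
    dotProduct_sub, ← hv] at h1
  simp only [dotProduct_smul, smul_eq_mul] at h1
  have hvv := aux_dp_pos hv0
  nlinarith [h1, hvv]

end AuxLemmas

lemma aux_dp_nonneg {n : Type*} [Fintype n] (v : n → ℝ) : 0 ≤ v ⬝ᵥ v :=
  Finset.sum_nonneg fun i _ => mul_self_nonneg _

section ConcreteLemmas

open Matrix

lemma aux_Om : Omega 2 = !![0,1,0,0; -1,0,0,0; 0,0,0,1; 0,0,-1,0] := by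
  ext i j
  fin_cases i <;> fin_cases j <;>
    norm_num [Omega, Matrix.vecHead, Matrix.vecTail]

lemma aux_T : Tmat 2 1 = !![1,0,0,0; 0,1,0,0; 0,0,1,0; 0,0,0,-1] := by
  ext i j
  fin_cases i <;> fin_cases j <;>
    norm_num [Tmat, Matrix.diagonal, Matrix.vecHead, Matrix.vecTail, Fin.ext_iff]

lemma aux_OPT : OmegaPT 2 1 = !![0,1,0,0; -1,0,0,0; 0,0,0,-1; 0,0,1,0] := by
  rw [OmegaPT, aux_Om, aux_T]
  ext i j
  fin_cases i <;> fin_cases j <;>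
    simp [Matrix.mul_apply, Fin.sum_univ_four, Matrix.vecHead, Matrix.vecTail]

lemma aux_WW : (OmegaPT 2 1)ᵀ * (OmegaPT 2 1) = 1 := by
  rw [aux_OPT]
  ext i j
  fin_cases i <;> fin_cases j <;>
    simp [Matrix.mul_apply, Fin.sum_univ_four, Matrix.vecHead, Matrix.vecTail, Matrix.one_apply]

lemma aux_OmOm : (Omega 2) * (Omega 2) = -1 := by
  rw [aux_Om]
  ext i j
  fin_cases i <;> fin_cases j <;>
    simp [Matrix.mul_apply, Fin.sum_univ_four, Matrix.vecHead, Matrix.vecTail, Matrix.one_apply]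

lemma aux_OmTOm : (Omega 2)ᵀ * (Omega 2) = 1 := by
  rw [aux_Om]
  ext i j
  fin_cases i <;> fin_cases j <;>
    simp [Matrix.mul_apply, Fin.sum_univ_four, Matrix.vecHead, Matrix.vecTail, Matrix.one_apply]

lemma aux_quadM (x : Fin 4 → ℝ) :
    x ⬝ᵥ (!![0,0,1,0; 0,0,0,-1; 1,0,0,0; 0,-1,0,0] : Matrix (Fin 4) (Fin 4) ℝ) *ᵥ x
      = 2*(x 0 * x 2) - 2*(x 1 * x 3) := by
  simp [dotProduct, Matrix.mulVec, Fin.sum_univ_four, Matrix.vecHead, Matrix.vecTail]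
  ring

lemma aux_dpself (x : Fin 4 → ℝ) : x ⬝ᵥ x = x 0^2 + x 1^2 + x 2^2 + x 3^2 := by
  simp [dotProduct, Fin.sum_univ_four]
  ring

lemma aux_cm_real (σ : Matrix (Fin 4) (Fin 4) ℝ)
    (h : (σ.map (Complex.ofReal ·)
        + Complex.I • (!![0,1,0,0; -1,0,0,0; 0,0,0,1; 0,0,-1,0] : Matrix (Fin 4) (Fin 4) ℝ).map
          (Complex.ofReal ·)).PosSemidef)
    (x y : Fin 4 → ℝ) :
    0 ≤ x ⬝ᵥ σ *ᵥ x + y ⬝ᵥ σ *ᵥ y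
        - 2*(x ⬝ᵥ (!![0,1,0,0; -1,0,0,0; 0,0,0,1; 0,0,-1,0] : Matrix (Fin 4) (Fin 4) ℝ) *ᵥ y) := by
  have h2 := h.dotProduct_mulVec_nonneg (fun j => (x j : ℂ) + Complex.I * (y j : ℂ))
  rw [Complex.le_def] at h2
  have hre := h2.1
  simp only [Complex.zero_re] at hre
  refine le_trans hre (le_of_eq ?_)
  simp only [dotProduct, Matrix.mulVec, Fin.sum_univ_four, Matrix.add_apply,
    Matrix.map_apply, Matrix.smul_apply, Pi.star_apply, Complex.star_def,
    _root_.map_add, _root_.map_mul, Complex.conj_ofReal, Complex.conj_I, smul_eq_mul,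
    Matrix.cons_val', Matrix.cons_val_zero, Matrix.cons_val_one, Matrix.head_cons,
    Matrix.empty_val', Matrix.cons_val_fin_one, Matrix.head_fin_const,
    Matrix.vecHead, Matrix.vecTail]
  set_option maxHeartbeats 1000000 in
  norm_num [Complex.add_re, Complex.mul_re, Complex.add_im, Complex.mul_im,
    Matrix.vecHead, Matrix.vecTail, Matrix.cons_val]
  simp only [Matrix.cons_val, Matrix.cons_val_zero, Matrix.cons_val_one, Matrix.head_cons]
  ring

end ConcreteLemmas


set_option maxHeartbeats 2000000

/-- **Parametric system, maximal entanglement.** For the degenerate parametric dynamics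
`A = −(1/2)𝟙₄ + χM`, `D = (1+2N)𝟙₄` with `M = [[0,σz],[σz,0]]` and `0 ≤ χ < 1/2`:
`Ã = 𝟙₄ − 2χM` is positive definite with its two smallest eigenvalues equal to `1−2χ`, and
every covariance matrix `σ` satisfying `Aσ + σAᵀ + D ≥ 0` has, for the 1 vs 1 bipartition,
`ν̃₋ ≥ (1−2χ)/(1+2N)`, equivalently `E_N(σ) ≤ log₂(1+2N) − log₂(1−2χ)`. -/
theorem parametric_system_maximal_entanglement (N χ : ℝ) (hN : 0 ≤ N)
    (hχ0 : 0 ≤ χ) (hχ : χ < 1/2)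
    (M A D : Matrix (Fin (2*2)) (Fin (2*2)) ℝ)
    (hM : M = !![0,0,1,0; 0,0,0,-1; 1,0,0,0; 0,-1,0,0])
    (hA : A = (-(1/2) : ℝ) • 1 + χ • M) (hD : D = (1 + 2*N) • 1) :
    (-(A + Aᵀ)).PosDef ∧ -(A + Aᵀ) = 1 - (2*χ) • M ∧
    eigUp (-(A + Aᵀ)) ⟨0, by omega⟩ = 1 - 2*χ ∧
    eigUp (-(A + Aᵀ)) ⟨1, by omega⟩ = 1 - 2*χ ∧
    ∀ σ : Matrix (Fin (2*2)) (Fin (2*2)) ℝ, IsCM 2 σ →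
      (A * σ + σ * Aᵀ + D).PosSemidef →
      (1 - 2*χ) / (1 + 2*N) ≤ nuMin 2 1 σ ∧
        logNeg 2 1 σ ≤ Real.logb 2 (1+2*N) - Real.logb 2 (1-2*χ) := by
  have hMsym : Mᵀ = M := by
    rw [hM]; ext i j
    fin_cases i <;> fin_cases j <;>
      simp [Matrix.transpose_apply, Matrix.vecHead, Matrix.vecTail]
  have hM2 : M * M = 1 := by
    rw [hM]; ext i j
    fin_cases i <;> fin_cases j <;>
      simp [Matrix.mul_apply, Fin.sum_univ_four, Matrix.one_apply,
        Matrix.vecHead, Matrix.vecTail]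
  have hAt : -(A + Aᵀ) = 1 - (2*χ) • M := by
    rw [hA, Matrix.transpose_add, Matrix.transpose_smul, Matrix.transpose_smul,
      Matrix.transpose_one, hMsym]
    module
  rw [hAt]
  have hHerm : ((1 : Matrix (Fin (2*2)) (Fin (2*2)) ℝ) - (2*χ) • M).IsHermitian := by
    unfold Matrix.IsHermitian
    rw [Matrix.conjTranspose_eq_transpose_of_trivial, Matrix.transpose_sub,
      Matrix.transpose_one, Matrix.transpose_smul, hMsym]
  have hPD : ((1 : Matrix (Fin (2*2)) (Fin (2*2)) ℝ) - (2*χ) • M).PosDef := by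
    refine Matrix.PosDef.of_dotProduct_mulVec_pos hHerm fun x hx => ?_
    rw [star_trivial, Matrix.sub_mulVec, Matrix.smul_mulVec, Matrix.one_mulVec,
      dotProduct_sub, dotProduct_smul, smul_eq_mul]
    have hq : x ⬝ᵥ M *ᵥ x = 2*(x 0 * x 2) - 2*(x 1 * x 3) := by
      rw [hM]; exact aux_quadM x
    have hxx : 0 < x ⬝ᵥ x := aux_dp_pos hx
    have hxx4 : x ⬝ᵥ x = x 0^2 + x 1^2 + x 2^2 + x 3^2 := aux_dpself x
    rw [hq]
    nlinarith [sq_nonneg (x 0 - x 2), sq_nonneg (x 0 + x 2), sq_nonneg (x 1 - x 3),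
      sq_nonneg (x 1 + x 3)]
  -- eigenvalue claims
  have hsq : ((1 : Matrix (Fin (2*2)) (Fin (2*2)) ℝ) - (2*χ) • M)
      * ((1 : Matrix (Fin (2*2)) (Fin (2*2)) ℝ) - (2*χ) • M)
      = (2:ℝ) • ((1 : Matrix (Fin (2*2)) (Fin (2*2)) ℝ) - (2*χ) • M)
        - (1 - 4*χ^2) • (1 : Matrix (Fin (2*2)) (Fin (2*2)) ℝ) := by
    rw [hM]
    ext i j
    fin_cases i <;> fin_cases j <;>
      simp [Matrix.mul_apply, Fin.sum_univ_four, Matrix.one_apply,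
        Matrix.vecHead, Matrix.vecTail] <;> ring
  have heig : ∀ i, hHerm.eigenvalues i = 1 - 2*χ ∨ hHerm.eigenvalues i = 1 + 2*χ := by
    intro i
    set μ := hHerm.eigenvalues i with hμ
    have hv := hHerm.mulVec_eigenvectorBasis i
    set v : Fin (2*2) → ℝ := ⇑(hHerm.eigenvectorBasis i) with hvdef
    have hvne : v ≠ 0 := by
      intro h
      exact hHerm.eigenvectorBasis.orthonormal.ne_zero i (by ext j; exact congrFun h j)
    have h2 : (((1 : Matrix (Fin (2*2)) (Fin (2*2)) ℝ) - (2*χ) • M)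
        * ((1 : Matrix (Fin (2*2)) (Fin (2*2)) ℝ) - (2*χ) • M)) *ᵥ v = (μ^2) • v := by
      rw [← Matrix.mulVec_mulVec, hv, Matrix.mulVec_smul, hv, smul_smul, ← hμ]
      congr 1; ring
    rw [hsq] at h2
    rw [Matrix.sub_mulVec, Matrix.smul_mulVec, Matrix.smul_mulVec,
      Matrix.one_mulVec, hv, ← hμ, smul_smul] at h2
    have hmul : (2*μ - (1 - 4*χ^2)) • v = μ^2 • v := by
      rw [← h2, sub_smul]
    have h3 : (μ^2 - 2*μ + (1 - 4*χ^2)) • v = 0 := by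
      rw [show (μ^2 - 2*μ + (1 - 4*χ^2)) = μ^2 - (2*μ - (1-4*χ^2)) from by ring,
        sub_smul, hmul, sub_self]
    have h4 : μ^2 - 2*μ + (1 - 4*χ^2) = 0 := by
      rcases smul_eq_zero.mp h3 with h | h
      · exact h
      · exact absurd h hvne
    have h5 : (μ - (1 - 2*χ)) * (μ - (1 + 2*χ)) = 0 := by linear_combination h4
    rcases mul_eq_zero.mp h5 with h | h
    · left; linarith
    · right; linarith
  have htr : ∑ i, hHerm.eigenvalues i = 4 := by
    rw [aux_sum_eig_trace]
    rw [hM]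
    simp [Matrix.trace, Fin.sum_univ_four, Matrix.vecHead, Matrix.vecTail]
  have hg : eigUp ((1 : Matrix (Fin (2*2)) (Fin (2*2)) ℝ) - (2*χ) • M)
      = hHerm.eigenvalues ∘ Tuple.sort hHerm.eigenvalues := dif_pos hHerm
  have hmono : Monotone (eigUp ((1 : Matrix (Fin (2*2)) (Fin (2*2)) ℝ) - (2*χ) • M)) := by
    rw [hg]; exact Tuple.monotone_sort _
  have hsum : ∑ i, eigUp ((1 : Matrix (Fin (2*2)) (Fin (2*2)) ℝ) - (2*χ) • M) i = 4 := by
    rw [hg]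
    rw [show ∑ i, (hHerm.eigenvalues ∘ ⇑(Tuple.sort hHerm.eigenvalues)) i
        = ∑ i, hHerm.eigenvalues i from Equiv.sum_comp _ _]
    exact htr
  have hmem : ∀ i, eigUp ((1 : Matrix (Fin (2*2)) (Fin (2*2)) ℝ) - (2*χ) • M) i = 1 - 2*χ
      ∨ eigUp ((1 : Matrix (Fin (2*2)) (Fin (2*2)) ℝ) - (2*χ) • M) i = 1 + 2*χ := by
    intro i; rw [hg]; exact heig _
  have goal0 : eigUp ((1 : Matrix (Fin (2*2)) (Fin (2*2)) ℝ) - (2*χ) • M) ⟨0, by omega⟩ = 1 - 2*χ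
      ∧ eigUp ((1 : Matrix (Fin (2*2)) (Fin (2*2)) ℝ) - (2*χ) • M) ⟨1, by omega⟩ = 1 - 2*χ := by
    set g := eigUp ((1 : Matrix (Fin (2*2)) (Fin (2*2)) ℝ) - (2*χ) • M) with hgdef
    have e0 : (⟨0, by omega⟩ : Fin (2*2)) = 0 := rfl
    have e1 : (⟨1, by omega⟩ : Fin (2*2)) = 1 := rfl
    rw [e0, e1]
    rw [Fin.sum_univ_four] at hsum
    have m01 : g 0 ≤ g 1 := hmono (by decide)
    have m12 : g 1 ≤ g 2 := hmono (by decide)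
    have m23 : g 2 ≤ g 3 := hmono (by decide)
    rcases hmem 0 with h0 | h0 <;> rcases hmem 1 with h1 | h1 <;>
      rcases hmem 2 with h2 | h2 <;> rcases hmem 3 with h3 | h3 <;>
      constructor <;> linarith
  refine ⟨hPD, rfl, goal0.1, goal0.2, ?_⟩
  -- main entanglement bound
  intro σ hcm hst
  obtain ⟨hsymm, hpsdC⟩ := hcm
  have hσsym : σᵀ = σ := hsymm
  have key : ∀ x y : Fin (2*2) → ℝ,
      0 ≤ x ⬝ᵥ σ *ᵥ x + y ⬝ᵥ σ *ᵥ y - 2*(x ⬝ᵥ (Omega 2) *ᵥ y) := by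
    intro x y
    rw [aux_Om] at hpsdC ⊢
    exact aux_cm_real σ hpsdC x y
  have hps : σ.PosSemidef := by
    refine Matrix.PosSemidef.of_dotProduct_mulVec_nonneg ?_ ?_
    · unfold Matrix.IsHermitian
      rw [Matrix.conjTranspose_eq_transpose_of_trivial]
      exact hσsym
    · intro x
      rw [star_trivial]
      have h := key x 0
      simpa using h
  have hq0 : ∀ w : Fin (2*2) → ℝ, 0 ≤ w ⬝ᵥ σ *ᵥ w := fun w => by simpa using hps.dotProduct_mulVec_nonneg w
  -- stationarity inequality
  have hstq : ∀ w : Fin (2*2) → ℝ,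
      0 ≤ -(w ⬝ᵥ σ *ᵥ w) + 2*χ*((M *ᵥ w) ⬝ᵥ σ *ᵥ w) + (1+2*N)*(w ⬝ᵥ w) := by
    intro w
    have h := hst.dotProduct_mulVec_nonneg w
    rw [star_trivial, hA, hD] at h
    rw [Matrix.transpose_add, Matrix.transpose_smul, Matrix.transpose_smul,
      Matrix.transpose_one, hMsym] at h
    rw [Matrix.add_mul, Matrix.mul_add] at h
    simp only [smul_mul_assoc, mul_smul_comm, Matrix.one_mul, Matrix.mul_one] at h
    simp only [Matrix.add_mulVec, Matrix.smul_mulVec, Matrix.one_mulVec,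
      dotProduct_add, dotProduct_smul, smul_eq_mul,
      ← Matrix.mulVec_mulVec] at h
    rw [aux_move hMsym w (σ *ᵥ w), aux_swap hσsym w (M *ᵥ w)] at h
    linarith [h]
  have hMMv : ∀ w : Fin (2*2) → ℝ, M *ᵥ (M *ᵥ w) = w := by
    intro w; rw [Matrix.mulVec_mulVec, hM2, Matrix.one_mulVec]
  have hMn : ∀ w : Fin (2*2) → ℝ, (M *ᵥ w) ⬝ᵥ (M *ᵥ w) = w ⬝ᵥ w := by
    intro w; rw [aux_dpA, hMsym, hM2, Matrix.one_mulVec]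
  have hub : ∀ w : Fin (2*2) → ℝ, (1-2*χ) * (w ⬝ᵥ σ *ᵥ w) ≤ (1+2*N) * (w ⬝ᵥ w) := by
    intro w
    have h1 := hstq w
    have h2 := hstq (M *ᵥ w)
    rw [hMMv w, hMn w, aux_swap hσsym w (M *ᵥ w)] at h2
    have hcs := aux_cs hps (M *ᵥ w) w
    have hp := hq0 w
    have hr := hq0 (M *ᵥ w)
    have hn := aux_dp_nonneg w
    set p := w ⬝ᵥ σ *ᵥ w
    set r := (M *ᵥ w) ⬝ᵥ σ *ᵥ (M *ᵥ w)
    set t := (M *ᵥ w) ⬝ᵥ σ *ᵥ w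
    set n2 := w ⬝ᵥ w
    rcases le_total p r with hpr | hpr
    · have htr2 : t ≤ r := by nlinarith
      nlinarith
    · have htp : t ≤ p := by nlinarith
      nlinarith
  -- physicality lower bound
  have hlb : ∀ v : Fin (2*2) → ℝ, (1-2*χ) * (v ⬝ᵥ v) ≤ (1+2*N) * (v ⬝ᵥ σ *ᵥ v) := by
    intro v
    have hdisc : ∀ s : ℝ,
        0 ≤ ((Omega 2 *ᵥ v) ⬝ᵥ σ *ᵥ (Omega 2 *ᵥ v)) * (s*s) + (2*(v ⬝ᵥ v)) * s
          + v ⬝ᵥ σ *ᵥ v := by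
      intro s
      have h := key v (s • (Omega 2 *ᵥ v))
      have hOO : v ⬝ᵥ (Omega 2) *ᵥ ((Omega 2) *ᵥ v) = -(v ⬝ᵥ v) := by
        rw [Matrix.mulVec_mulVec, aux_OmOm, Matrix.neg_mulVec, Matrix.one_mulVec,
          dotProduct_neg]
      simp only [Matrix.mulVec_smul, dotProduct_smul, smul_dotProduct] at h
      rw [hOO] at h
      simp only [smul_eq_mul] at h
      nlinarith [h]
    have hd := discrim_le_zero hdisc
    rw [discrim] at hd
    have hΩn : (Omega 2 *ᵥ v) ⬝ᵥ (Omega 2 *ᵥ v) = v ⬝ᵥ v := by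
      rw [aux_dpA, aux_OmTOm, Matrix.one_mulVec]
    have hubΩ := hub (Omega 2 *ᵥ v)
    rw [hΩn] at hubΩ
    have hnn := aux_dp_nonneg v
    rcases eq_or_lt_of_le hnn with h0 | h0
    · rw [← h0, mul_zero]
      exact mul_nonneg (by linarith) (hq0 v)
    · nlinarith [hd, mul_le_mul_of_nonneg_right hubΩ (hq0 v), hq0 (Omega 2 *ᵥ v), hq0 v]
  have hKpos : (0:ℝ) < 1+2*N := by linarith
  have hχpos : (0:ℝ) < 1-2*χ := by linarith
  set c : ℝ := (1-2*χ)/(1+2*N) with hc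
  have hcpos : 0 < c := div_pos hχpos hKpos
  have hσc : (σ - c • 1).PosSemidef := by
    refine Matrix.PosSemidef.of_dotProduct_mulVec_nonneg ?_ ?_
    · refine Matrix.IsHermitian.sub hps.1 ?_
      unfold Matrix.IsHermitian
      rw [Matrix.conjTranspose_smul, star_trivial, Matrix.conjTranspose_one]
    · intro x
      rw [star_trivial, Matrix.sub_mulVec, Matrix.smul_mulVec, Matrix.one_mulVec,
        dotProduct_sub, dotProduct_smul, smul_eq_mul, sub_nonneg, hc,
        div_mul_eq_mul_div, div_le_iff₀ hKpos]
      linarith [hlb x]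
  have hmsqrt : msqrt σ = hps.1.eigenvectorUnitary.1 * diagonal (Real.sqrt ∘ hps.1.eigenvalues) *
      (star hps.1.eigenvectorUnitary : Matrix (Fin (2*2)) (Fin (2*2)) ℝ) := dif_pos hps
  set S : Matrix (Fin (2*2)) (Fin (2*2)) ℝ := hps.1.eigenvectorUnitary.1 *
    diagonal (Real.sqrt ∘ hps.1.eigenvalues) *
      (star hps.1.eigenvectorUnitary : Matrix (Fin (2*2)) (Fin (2*2)) ℝ) with hSdef
  have hUU : (star hps.1.eigenvectorUnitary : Matrix (Fin (2*2)) (Fin (2*2)) ℝ)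
      * hps.1.eigenvectorUnitary.1 = 1 := Unitary.coe_star_mul_self _
  have hSS : S * S = σ := by
    conv_rhs => rw [hps.1.spectral_theorem, Unitary.conjStarAlgAut_apply]
    rw [hSdef]
    calc _ = hps.1.eigenvectorUnitary.1 * (diagonal (Real.sqrt ∘ hps.1.eigenvalues) *
          ((star hps.1.eigenvectorUnitary : Matrix (Fin (2*2)) (Fin (2*2)) ℝ)
          * hps.1.eigenvectorUnitary.1) * diagonal (Real.sqrt ∘ hps.1.eigenvalues)) *
          (star hps.1.eigenvectorUnitary : Matrix (Fin (2*2)) (Fin (2*2)) ℝ) := by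
            simp only [Matrix.mul_assoc]
      _ = _ := by
        rw [hUU, Matrix.mul_one, diagonal_mul_diagonal]
        congr 3
        funext i
        simp [Real.mul_self_sqrt (hps.eigenvalues_nonneg i)]
  have hSsym : Sᵀ = S := by
    rw [← Matrix.conjTranspose_eq_transpose_of_trivial, hSdef]
    simp [Matrix.conjTranspose_mul, Matrix.star_eq_conjTranspose, Matrix.mul_assoc]
  have h1 : ((OmegaPT 2 1)ᵀ * σ * OmegaPT 2 1 - c • 1).PosSemidef := by
    have h := hσc.conjTranspose_mul_mul_same (OmegaPT 2 1)
    rw [Matrix.conjTranspose_eq_transpose_of_trivial] at h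
    have e1 : (OmegaPT 2 1)ᵀ * (σ - c • 1) * OmegaPT 2 1
        = (OmegaPT 2 1)ᵀ * σ * OmegaPT 2 1 - c • 1 := by
      rw [Matrix.mul_sub, Matrix.sub_mul, mul_smul_comm, Matrix.mul_one, smul_mul_assoc,
        aux_WW]
    rwa [e1] at h
  have h2 : (S * (OmegaPT 2 1)ᵀ * σ * OmegaPT 2 1 * S - c • σ).PosSemidef := by
    have h := h1.conjTranspose_mul_mul_same S
    rw [Matrix.conjTranspose_eq_transpose_of_trivial, hSsym] at h
    have e2 : S * ((OmegaPT 2 1)ᵀ * σ * OmegaPT 2 1 - c • 1) * S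
        = S * (OmegaPT 2 1)ᵀ * σ * OmegaPT 2 1 * S - c • σ := by
      rw [Matrix.mul_sub, Matrix.sub_mul, mul_smul_comm, Matrix.mul_one, smul_mul_assoc]
      rw [← hSS]
      simp only [Matrix.mul_assoc]
    rwa [e2] at h
  have h3 : (c • σ - (c^2) • (1 : Matrix (Fin (2*2)) (Fin (2*2)) ℝ)).PosSemidef := by
    have h := aux_psd_smul hσc hcpos.le
    have e3 : c • (σ - c • (1 : Matrix (Fin (2*2)) (Fin (2*2)) ℝ))
        = c • σ - (c^2) • 1 := by
      rw [smul_sub, smul_smul]; ring_nf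
    rwa [e3] at h
  have hBc : (S * (OmegaPT 2 1)ᵀ * σ * OmegaPT 2 1 * S - (c^2) • 1).PosSemidef := by
    have h := h2.add h3
    rwa [show S * (OmegaPT 2 1)ᵀ * σ * OmegaPT 2 1 * S - c • σ + (c • σ - (c^2) • 1)
        = S * (OmegaPT 2 1)ᵀ * σ * OmegaPT 2 1 * S - (c^2) • 1 from by abel] at h
  have hBH : (S * (OmegaPT 2 1)ᵀ * σ * OmegaPT 2 1 * S).IsHermitian := by
    have hB := hBc.add (aux_psd_smul Matrix.PosSemidef.one (sq_nonneg c))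
    rw [sub_add_cancel] at hB
    exact hB.1
  have hspec : c^2 ≤ nuSq 2 1 σ := by
    rw [nuSq, hmsqrt]
    exact aux_spec_lb hBH hBc
  have hnu : c ≤ nuMin 2 1 σ := by
    rw [nuMin]
    calc c = Real.sqrt (c^2) := (Real.sqrt_sq hcpos.le).symm
    _ ≤ _ := Real.sqrt_le_sqrt hspec
  refine ⟨hnu, ?_⟩
  have hνpos : 0 < nuMin 2 1 σ := lt_of_lt_of_le hcpos hnu
  rw [logNeg]
  apply max_le
  · rw [sub_nonneg]
    exact (Real.logb_le_logb one_lt_two hχpos hKpos).mpr (by linarith)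
  · have hl1 : Real.logb 2 c ≤ Real.logb 2 (nuMin 2 1 σ) :=
      (Real.logb_le_logb one_lt_two hcpos hνpos).mpr hnu
    have hl2 : Real.logb 2 c = Real.logb 2 (1-2*χ) - Real.logb 2 (1+2*N) :=
      Real.logb_div (ne_of_gt hχpos) (ne_of_gt hKpos)
    linarith
end
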